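/- For any composition I and a formal variable u, the identity ∑_{J: I ⪰ J} ((-1)^{ℓ(J)} u^{ℓ(J)}) / (ℓ(J)! · ℓ(I, J)) = (-1)^{ℓ(I)} · C(u, ℓ(I)) holds in Q[u], where the sum runs over compositions J coarser than I (i.e., I refines J), ℓ(I,J) = ∏_a ℓ(I_a) with I_a the blocks of I relative to J, and C(u,k) is the binomial coefficient polynomial. -/

import Mathlib

open Polynomial

/-- The polynomial binomial coefficient `C(u, m) = u(u-1)⋯(u-m+1)/m!` over `ℚ`. -/
noncomputable def binPoly (m : ℕ) : Polynomial ℚ :=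
  ((m.factorial : ℚ)⁻¹) • descPochhammer ℚ m

open Finset

/-- Splitting off the first block of a composition of `n+1`. -/
def splitEquiv (n : ℕ) : (Σ a : Fin (n+1), Composition (n - (a : ℕ))) ≃ Composition (n+1) where
  toFun p := ⟨((p.1 : ℕ) + 1) :: p.2.blocks,
    by
      intro i hi
      rcases List.mem_cons.1 hi with h | h
      · omega
      · exact p.2.blocks_pos h,
    by
      have := p.2.blocks_sum
      have := p.1.2
      simp only [List.sum_cons, this]
      omega⟩
  invFun c := by
    have hne : c.blocks ≠ [] := by
      intro h
      have := c.blocks_sum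
      rw [h] at this; simp at this
    have hpos : 0 < c.blocks.head hne := c.blocks_pos (List.head_mem hne)
    have hsum : c.blocks.head hne + c.blocks.tail.sum = n + 1 := by
      have := c.blocks_sum
      rw [← List.cons_head_tail hne, List.sum_cons] at this
      exact this
    refine ⟨⟨c.blocks.head hne - 1, by omega⟩,
      ⟨c.blocks.tail, ?_, ?_⟩⟩
    · intro i hi
      exact c.blocks_pos (List.mem_of_mem_tail hi)
    · simp only
      omega
  left_inv := by
    rintro ⟨a, c⟩
    simp only [List.head_cons, List.tail_cons, Nat.add_sub_cancel]
    rfl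
  right_inv := by
    intro c
    have hne : c.blocks ≠ [] := by
      intro h
      have := c.blocks_sum
      rw [h] at this; simp at this
    ext1
    simp only
    have hpos : 0 < c.blocks.head hne := c.blocks_pos (List.head_mem hne)
    have : c.blocks.head hne - 1 + 1 = c.blocks.head hne := by omega
    rw [this]
    exact List.cons_head_tail hne

/-- The composition-sum polynomial. -/
noncomputable def Spoly (n : ℕ) : Polynomial ℚ :=
  ∑ c : Composition n,
    (((-1 : ℚ) ^ c.length / ((c.length.factorial : ℚ) * (c.blocks.prod : ℚ))) •
      (X ^ c.length : Polynomial ℚ))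

lemma Composition.prod_pos {n : ℕ} (c : Composition n) : 0 < c.blocks.prod :=
  List.prod_pos fun _ h => c.blocks_pos h

lemma Spoly_deriv (n : ℕ) :
    derivative (Spoly (n+1)) =
      ∑ a : Fin (n+1), (-(1:ℚ)/((a : ℕ)+1)) • Spoly (n - (a : ℕ)) := by
  rw [Spoly, ← (splitEquiv n).sum_comp
    (fun c => (((-1 : ℚ) ^ c.length / ((c.length.factorial : ℚ) * (c.blocks.prod : ℚ))) •
      (X ^ c.length : Polynomial ℚ))), ← Finset.univ_sigma_univ, Finset.sum_sigma, map_sum]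
  refine Finset.sum_congr rfl fun a _ => ?_
  rw [Spoly, Finset.smul_sum, map_sum]
  refine Finset.sum_congr rfl fun c _ => ?_
  have hlen : ((splitEquiv n) ⟨a, c⟩).length = c.length + 1 := by
    simp [splitEquiv, Composition.length]
  have hprod : (((splitEquiv n) ⟨a, c⟩).blocks.prod : ℚ)
      = ((a : ℕ) + 1) * (c.blocks.prod : ℚ) := by
    simp [splitEquiv]
  rw [hlen, hprod, derivative_smul, derivative_X_pow, Nat.add_sub_cancel,
    ← smul_eq_C_mul, smul_smul, smul_smul]
  congr 1
  have hk : ((c.length.factorial : ℚ)) ≠ 0 := by positivity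
  have hP : ((c.blocks.prod : ℚ)) ≠ 0 := by
    have := c.prod_pos; positivity
  have ha : ((a : ℕ) : ℚ) + 1 ≠ 0 := by positivity
  set P : ℚ := (c.blocks.prod : ℚ) with hPdef
  rw [Nat.factorial_succ]
  push_cast
  field_simp
  ring

lemma Spoly_coeff_zero (n : ℕ) : (Spoly (n+1)).coeff 0 = 0 := by
  rw [Spoly, Polynomial.finset_sum_coeff]
  refine Finset.sum_eq_zero fun c _ => ?_
  rw [Polynomial.coeff_smul, Polynomial.coeff_X_pow]
  have : 0 < c.length := c.length_pos_of_pos (Nat.succ_pos n)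
  rw [if_neg (by omega)]
  simp

lemma Spoly_zero : Spoly 0 = 1 := by
  rw [Spoly]
  have hu : ∀ c : Composition 0, c = ⟨[], by simp, by simp⟩ := by
    intro c
    ext1
    have h := c.blocks_sum
    have hp : ∀ i ∈ c.blocks, 0 < i := fun i hi => c.blocks_pos hi
    rcases hl : c.blocks with _ | ⟨a, l⟩
    · rfl
    · exfalso
      rw [hl, List.sum_cons] at h
      have : 0 < a := hp a (by rw [hl]; exact List.mem_cons_self)
      omega
  rw [Fintype.sum_eq_single ⟨[], by simp, by simp⟩ (fun c h => absurd (hu c) h)]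
  simp [Composition.length]

/-- Key fact used for `desc_deriv`: `D_b * (X - (n+1)) = D_{b+1} - (n+1-b) * D_b`. -/
lemma desc_mul_shift (n b : ℕ) (hb : b ≤ n) :
    descPochhammer ℚ b * (X - (((n:ℕ) + 1 : ℕ) : ℚ[X])) =
      descPochhammer ℚ (b+1) - (((n + 1 - b : ℕ) : ℚ)) • descPochhammer ℚ b := by
  rw [descPochhammer_succ_right]
  have : ((n + 1 - b : ℕ) : ℚ) = (n : ℚ) + 1 - (b : ℚ) := by
    push_cast [Nat.cast_sub (by omega : b ≤ n + 1)]
    ring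
  rw [this, smul_eq_C_mul]
  simp only [map_sub, map_add, map_one, Polynomial.C_eq_natCast]
  push_cast
  ring

/-- The coefficient in the derivative expansion of `descPochhammer`. -/
noncomputable def dcoef (n b : ℕ) : ℚ :=
  (-1:ℚ)^(n-b) * ((n+1).factorial : ℚ) / (((n+1-b : ℕ) : ℚ) * (b.factorial : ℚ))

lemma desc_deriv : ∀ n : ℕ, derivative (descPochhammer ℚ (n+1)) =
    ∑ b ∈ Finset.range (n+1), dcoef n b • descPochhammer ℚ b := by
  intro n
  induction n with
  | zero =>
    simp [dcoef]
  | succ n ih =>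
    rw [descPochhammer_succ_right ℚ (n+1), derivative_mul, derivative_sub, derivative_X,
      derivative_natCast, sub_zero, mul_one, ih, Finset.sum_mul]
    have hterm : ∀ b ∈ Finset.range (n+1),
        (dcoef n b • descPochhammer ℚ b) * (X - (((n:ℕ)+1:ℕ) : ℚ[X]))
          = dcoef n b • descPochhammer ℚ (b+1)
            - (dcoef n b * (((n+1-b : ℕ)) : ℚ)) • descPochhammer ℚ b := by
      intro b hb
      rw [Finset.mem_range] at hb
      rw [smul_mul_assoc, desc_mul_shift n b (by omega), smul_sub, smul_smul]
    rw [Finset.sum_congr rfl hterm, Finset.sum_sub_distrib]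
    rw [Finset.sum_range_succ' (fun b => dcoef (n+1) b • descPochhammer ℚ b) (n+1)]
    have hB : ∑ b ∈ Finset.range (n+1),
        (dcoef n b * (((n+1-b : ℕ)) : ℚ)) • descPochhammer ℚ b
        = ∑ i ∈ Finset.range (n+1),
            (dcoef n (i+1) * (((n+1-(i+1) : ℕ)) : ℚ)) • descPochhammer ℚ (i+1)
          + (dcoef n 0 * (((n+1-0 : ℕ)) : ℚ)) • descPochhammer ℚ 0 := by
      rw [Finset.sum_range_succ'
        (fun b => (dcoef n b * (((n+1-b : ℕ)) : ℚ)) • descPochhammer ℚ b) n]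
      congr 1
      rw [Finset.sum_range_succ]
      have : (dcoef n (n+1) * (((n+1-(n+1) : ℕ)) : ℚ)) • descPochhammer ℚ (n+1) = 0 := by
        simp
      rw [this, add_zero]
    rw [hB]
    have key : ∀ i ∈ Finset.range (n+1),
        dcoef (n+1) (i+1) • descPochhammer ℚ (i+1)
          = dcoef n i • descPochhammer ℚ (i+1)
            - (dcoef n (i+1) * (((n+1-(i+1) : ℕ)) : ℚ)) • descPochhammer ℚ (i+1)
            + (if i = n then descPochhammer ℚ (i+1) else 0) := by
      intro i hi
      rw [Finset.mem_range] at hi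
      rw [← sub_smul]
      by_cases h : i = n
      · rw [if_pos h]
        subst h
        have h1 : dcoef i (i+1) * (((i+1-(i+1) : ℕ)) : ℚ) = 0 := by simp
        have h2 : dcoef (i+1) (i+1) = dcoef i i + 1 := by
          simp only [dcoef, Nat.sub_self, pow_zero, one_mul, Nat.add_sub_cancel]
          rw [Nat.factorial_succ (i+1), Nat.factorial_succ i]
          have hfi : ((i.factorial : ℚ)) ≠ 0 := by positivity
          push_cast
          field_simp
          rw [Nat.add_sub_cancel_left, Nat.cast_one]
        rw [h1, sub_zero, h2, add_smul, one_smul]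
      · rw [if_neg h, add_zero]
        congr 1
        have hin : i < n := by omega
        obtain ⟨j, rfl⟩ : ∃ j, n = i + j + 1 := ⟨n - i - 1, by omega⟩
        simp only [dcoef]
        have e1 : i + j + 1 + 1 - (i + 1) = j + 1 := by omega
        have e2 : i + j + 1 - (i + 1) = j := by omega
        have e3 : i + j + 1 + 1 - i = j + 2 := by omega
        have e4 : i + j + 1 + 1 + 1 - (i + 1) = j + 2 := by omega
        have e5 : i + j + 1 - i = j + 1 := by omega
        rw [e1, e2, e3, e4, e5]
        rw [Nat.factorial_succ (i+j+1+1), Nat.factorial_succ (i+j+1), Nat.factorial_succ i]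
        push_cast
        simp only [pow_succ]
        have hj : ((j:ℚ) + 1) ≠ 0 := by positivity
        have hj2 : ((j:ℚ) + 2) ≠ 0 := by positivity
        have hfi : ((i.factorial : ℚ)) ≠ 0 := by positivity
        have hfn : (((i+j+1).factorial : ℚ)) ≠ 0 := by positivity
        have hi1 : ((i:ℚ) + 1) ≠ 0 := by positivity
        field_simp
        ring
    rw [Finset.sum_congr rfl key, Finset.sum_add_distrib, Finset.sum_sub_distrib]
    have hind : ∑ i ∈ Finset.range (n+1), (if i = n then descPochhammer ℚ (i+1) else 0)
        = descPochhammer ℚ (n+1) := by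
      rw [Finset.sum_ite_eq' (Finset.range (n+1)) n (fun i => descPochhammer ℚ (i+1))]
      simp
    rw [hind]
    have h0 : dcoef (n+1) 0 = -(dcoef n 0 * (((n+1-0 : ℕ)) : ℚ)) := by
      simp only [dcoef, Nat.sub_zero, Nat.factorial_zero]
      rw [Nat.factorial_succ (n+1), pow_succ]
      push_cast
      have h1 : ((n:ℚ) + 1) ≠ 0 := by positivity
      have h2 : ((n:ℚ) + 2) ≠ 0 := by positivity
      field_simp
    rw [h0]
    module

noncomputable def Tpoly (n : ℕ) : Polynomial ℚ :=
  ((-1:ℚ)^n / (n.factorial : ℚ)) • descPochhammer ℚ n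

lemma Tpoly_deriv (n : ℕ) :
    derivative (Tpoly (n+1)) =
      ∑ a : Fin (n+1), (-(1:ℚ)/((a : ℕ)+1)) • Tpoly (n - (a : ℕ)) := by
  rw [Tpoly, derivative_smul, desc_deriv n, Finset.smul_sum,
    Fin.sum_univ_eq_sum_range (fun a => (-(1:ℚ)/((a : ℕ)+1)) • Tpoly (n - a)) (n+1),
    ← Finset.sum_range_reflect (fun a => (-(1:ℚ)/((a : ℕ)+1)) • Tpoly (n - a)) (n+1)]
  refine Finset.sum_congr rfl fun b hb => ?_
  rw [Finset.mem_range] at hb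
  have hb' : b ≤ n := by omega
  have h1 : n + 1 - 1 - b = n - b := by omega
  have h2 : n - (n - b) = b := by omega
  rw [h1, h2, Tpoly, smul_smul, smul_smul]
  congr 1
  obtain ⟨j, rfl⟩ : ∃ j, n = b + j := ⟨n - b, by omega⟩
  have h3 : b + j - b = j := by omega
  have h4 : b + j + 1 - b = j + 1 := by omega
  rw [dcoef, h3, h4, Nat.factorial_succ (b+j)]
  have hsq : (-1:ℚ)^j * (-1)^j = 1 := by
    rw [← pow_add, ← two_mul, pow_mul]
    norm_num
  have hfb : ((b.factorial : ℚ)) ≠ 0 := by positivity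
  have hfn : (((b+j).factorial : ℚ)) ≠ 0 := by positivity
  have hj1 : ((j:ℚ) + 1) ≠ 0 := by positivity
  have hn1 : ((b:ℚ) + (j:ℚ) + 1) ≠ 0 := by positivity
  rw [pow_add, pow_add, pow_succ]
  push_cast
  field_simp
  ring_nf
  have hp : (-1:ℚ)^(j*2) = 1 := by rw [mul_comm, pow_mul]; norm_num
  simp only [hp]

lemma Spoly_eq_Tpoly : ∀ n : ℕ, Spoly n = Tpoly n := by
  intro n
  induction n using Nat.strong_induction_on with
  | _ n ih =>
    match n with
    | 0 => rw [Spoly_zero, Tpoly]; simp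
    | (m+1) =>
      have hd : derivative (Spoly (m+1) - Tpoly (m+1)) = 0 := by
        rw [derivative_sub, Spoly_deriv, Tpoly_deriv, sub_eq_zero]
        refine Finset.sum_congr rfl fun a _ => ?_
        rw [ih (m - (a : ℕ)) (by omega)]
      have hc := Polynomial.eq_C_of_derivative_eq_zero hd
      have h0 : (Spoly (m+1) - Tpoly (m+1)).coeff 0 = 0 := by
        rw [Polynomial.coeff_sub, Spoly_coeff_zero, Tpoly, Polynomial.coeff_smul,
          Polynomial.coeff_zero_eq_eval_zero, descPochhammer_ne_zero_eval_zero (R := ℚ) (Nat.succ_ne_zero m)]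
        simp
      rw [h0, map_zero, sub_eq_zero] at hc
      exact hc

/-- for any composition `I`, the identity
`∑_{J : I ⪰ J} (-1)^{ℓ(J)} u^{ℓ(J)} / (ℓ(J)!·ℓ(I,J)) = (-1)^{ℓ(I)} C(u, ℓ(I))`
holds in `ℚ[u]`.  The compositions `J` coarser than `I` are indexed by the
compositions `c` of `ℓ(I)` (grouping consecutive parts of `I`); then `ℓ(J) = ℓ(c)` and
`ℓ(I,J) = ∏_a ℓ(I_a)` is the product of the parts of `c`. -/
theorem stmt10 (m : ℕ) (I : Composition m) :
    ∑ c : Composition I.length,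
        (((-1 : ℚ) ^ c.length / ((c.length.factorial : ℚ) * (c.blocks.prod : ℚ))) •
          (X ^ c.length : Polynomial ℚ))
      = ((-1 : ℚ) ^ I.length) • binPoly I.length := by
  show Spoly I.length = _
  rw [Spoly_eq_Tpoly, Tpoly, binPoly, smul_smul, div_eq_mul_inv]
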